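/- For an even cycle C_{2n} (n ≥ 2), the group chromatic number χ_g(C_{2n}) equals 3, while the ordinary chromatic number χ(C_{2n}) equals 2; in particular χ_g(C_{2n}) > χ(C_{2n}). -/

import Mathlib

open SimpleGraph

/-- `G` is `A`-colorable for the Abelian group `A`: for every "oriented weight" `f` on the
edges (encoded as an antisymmetric function on ordered pairs, which is equivalent to fixing an
orientation `D` of `E(G)` and a function `E(G) → A`), there is an `(A,f)`-coloring, i.e. a
vertex coloring `c : V → A` with `c u - c v ≠ f u v` for every edge oriented from `u` to `v`. -/
def IsGroupColorable {V : Type*} (G : SimpleGraph V) (A : Type) [AddCommGroup A] : Prop :=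
  ∀ f : V → V → A, (∀ u v, f v u = - f u v) →
    ∃ c : V → A, ∀ u v, G.Adj u v → c u - c v ≠ f u v

/-- The group chromatic number `χ_g(G)`: the least `m` such that `G` is `A`-colorable for
every Abelian group `A` of order at least `m`. -/
noncomputable def groupChromaticNumber {V : Type*} (G : SimpleGraph V) : ℕ :=
  sInf {m : ℕ | ∀ (A : Type) [AddCommGroup A] [Fintype A],
    m ≤ Fintype.card A → IsGroupColorable G A}

/-- `G` is group `k`-choosable: for every Abelian group `A` of order at least `k`, every
`k`-uniform list assignment `L`, and every antisymmetric edge weight `f` (i.e. an orientation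
together with a function `E(G) → A`), there is an `(A,L,f)`-coloring. -/
def IsGroupChoosable {V : Type*} (G : SimpleGraph V) (k : ℕ) : Prop :=
  ∀ (A : Type) [AddCommGroup A] [Fintype A], k ≤ Fintype.card A →
    ∀ L : V → Finset A, (∀ v, (L v).card = k) →
      ∀ f : V → V → A, (∀ u v, f v u = - f u v) →
        ∃ c : V → A, (∀ v, c v ∈ L v) ∧ ∀ u v, G.Adj u v → c u - c v ≠ f u v

/-- The group choice number `χ_gl(G)`: the least `k` such that `G` is group `k`-choosable. -/
noncomputable def groupChoiceNumber {V : Type*} (G : SimpleGraph V) : ℕ :=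
  sInf {k : ℕ | IsGroupChoosable G k}

/-- `G` is group `k`-edge-choosable iff its line graph is group `k`-choosable. -/
def IsGroupEdgeChoosable {V : Type*} (G : SimpleGraph V) (k : ℕ) : Prop :=
  IsGroupChoosable G.lineGraph k

/-- The group edge chromatic number `χ'_g(G) = χ_g(𝓛(G))`. -/
noncomputable def groupEdgeChromaticNumber {V : Type*} (G : SimpleGraph V) : ℕ :=
  groupChromaticNumber G.lineGraph

/-- The group edge choice number `χ'_gl(G) = χ_gl(𝓛(G))`. -/
noncomputable def groupEdgeChoiceNumber {V : Type*} (G : SimpleGraph V) : ℕ :=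
  groupChoiceNumber G.lineGraph

/-- `G` is a cycle (of some length `n ≥ 3`). -/
def IsCycleGraph {V : Type*} (G : SimpleGraph V) : Prop :=
  ∃ n : ℕ, 3 ≤ n ∧ Nonempty (G ≃g cycleGraph n)

/-! ### Auxiliary lemmas -/

/-- In a type with at least three elements we can avoid any two given values. -/
lemma exists_ne_ne' {A : Type} [Fintype A] (h : 3 ≤ Fintype.card A) (a b : A) :
    ∃ x : A, x ≠ a ∧ x ≠ b := by
  classical
  have h1 : ({a, b} : Finset A).card ≤ 2 := (Finset.card_insert_le a {b}).trans (by simp)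
  have h2 := Finset.le_card_sdiff ({a, b} : Finset A) Finset.univ
  have h3 : (Finset.univ \ {a, b} : Finset A).Nonempty := by
    rw [← Finset.card_pos]
    simp only [Finset.card_univ] at h2
    omega
  obtain ⟨x, hx⟩ := h3
  simp only [Finset.mem_sdiff, Finset.mem_insert, Finset.mem_singleton, not_or] at hx
  exact ⟨x, hx.2⟩

/-- Greedy sequence: start at `0`, and at each step avoid two prescribed values depending on
the step and the previous value. -/
noncomputable def greedyCol {A : Type} [AddCommGroup A] [Fintype A] (h : 3 ≤ Fintype.card A)
    (a b : ℕ → A → A) : ℕ → A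
  | 0 => 0
  | (i + 1) => (exists_ne_ne' h (a i (greedyCol h a b i)) (b i (greedyCol h a b i))).choose

lemma greedyCol_zero {A : Type} [AddCommGroup A] [Fintype A] (h : 3 ≤ Fintype.card A)
    (a b : ℕ → A → A) : greedyCol h a b 0 = 0 := rfl

lemma greedyCol_ne₁ {A : Type} [AddCommGroup A] [Fintype A] (h : 3 ≤ Fintype.card A)
    (a b : ℕ → A → A) (i : ℕ) :
    greedyCol h a b (i + 1) ≠ a i (greedyCol h a b i) :=
  (exists_ne_ne' h (a i (greedyCol h a b i)) (b i (greedyCol h a b i))).choose_spec.1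

lemma greedyCol_ne₂ {A : Type} [AddCommGroup A] [Fintype A] (h : 3 ≤ Fintype.card A)
    (a b : ℕ → A → A) (i : ℕ) :
    greedyCol h a b (i + 1) ≠ b i (greedyCol h a b i) :=
  (exists_ne_ne' h (a i (greedyCol h a b i)) (b i (greedyCol h a b i))).choose_spec.2

open Fin.NatCast Fin.CommRing in
/-- Any cycle is `A`-colorable for any Abelian group of order at least `3`. -/
lemma cycleGraph_isGroupColorable (m : ℕ) (A : Type) [AddCommGroup A] [Fintype A]
    (hA : 3 ≤ Fintype.card A) : IsGroupColorable (cycleGraph (m + 3)) A := by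
  intro f hf
  set g : ℕ → A := greedyCol hA
      (fun i p => p + f ((i + 1 : ℕ) : Fin (m + 3)) ((i : ℕ) : Fin (m + 3)))
      (fun i _ => f ((i + 1 : ℕ) : Fin (m + 3)) 0) with hg
  have key1 : ∀ i : ℕ, g (i + 1) ≠ g i + f ((i + 1 : ℕ) : Fin (m + 3)) ((i : ℕ) : Fin (m + 3)) :=
    fun i => greedyCol_ne₁ hA _ _ i
  have key2 : ∀ i : ℕ, g (i + 1) ≠ f ((i + 1 : ℕ) : Fin (m + 3)) 0 :=
    fun i => greedyCol_ne₂ hA _ _ i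
  refine ⟨fun v => g v.val, ?_⟩
  have key : ∀ u v : Fin (m + 3), (u - v).val = 1 → g u.val - g v.val ≠ f u v := by
    intro u v huv
    have hsub : u - v = 1 := by
      apply Fin.ext
      rw [huv, Fin.val_one]
    have h1 : u = v + 1 := by
      rw [← hsub]; ring
    by_cases hv : v.val + 1 < m + 3
    · have hu : u.val = v.val + 1 := by
        rw [h1, Fin.add_def, Fin.val_one]
        exact Nat.mod_eq_of_lt hv
      have hucast : ((v.val + 1 : ℕ) : Fin (m + 3)) = u := by
        apply Fin.ext
        rw [Fin.val_natCast, hu]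
        exact Nat.mod_eq_of_lt hv
      have hvcast : ((v.val : ℕ) : Fin (m + 3)) = v := by
        apply Fin.ext
        rw [Fin.val_natCast]
        exact Nat.mod_eq_of_lt v.isLt
      have hne := key1 v.val
      rw [hucast, hvcast] at hne
      rw [hu]
      intro hEq
      apply hne
      rw [sub_eq_iff_eq_add] at hEq
      rw [hEq]; exact add_comm _ _
    · have hv2 : v.val = m + 2 := by omega
      have hu : u.val = 0 := by
        rw [h1, Fin.add_def, Fin.val_one, hv2]
        simp
      have hu0 : u = 0 := by
        apply Fin.ext
        simpa using hu
      have hvcast : ((m + 2 : ℕ) : Fin (m + 3)) = v := by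
        apply Fin.ext
        rw [Fin.val_natCast, hv2]
        exact Nat.mod_eq_of_lt (by omega)
      have hne : g (m + 2) ≠ f ((m + 2 : ℕ) : Fin (m + 3)) 0 := key2 (m + 1)
      rw [hvcast] at hne
      have hg0 : g 0 = 0 := greedyCol_zero hA _ _
      subst hu0
      show g 0 - g v.val ≠ f 0 v
      rw [hv2, hg0, zero_sub, hf v 0]
      intro hEq
      exact hne (neg_injective hEq)
  intro u v hadj
  rw [cycleGraph_adj'] at hadj
  rcases hadj with h | h
  · exact key u v h
  · have hk := key v u h
    intro hEq
    apply hk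
    have hEq' : g u.val - g v.val = f u v := hEq
    rw [hf u v, ← hEq']
    exact (neg_sub _ _).symm

/-- An even cycle is not `ZMod 2`-colorable. -/
lemma not_isGroupColorable_zmod2 (N : ℕ) (hN : 4 ≤ N) (hEven : Even N) :
    ¬ IsGroupColorable (cycleGraph N) (ZMod 2) := by
  haveI : NeZero N := ⟨by omega⟩
  intro hcol
  set f : Fin N → Fin N → ZMod 2 := fun u v =>
    if (u.val = 0 ∧ v.val = N - 1) ∨ (u.val = N - 1 ∧ v.val = 0) then 1 else 0 with hfdef
  have hflip : ∀ x : ZMod 2, -x = x := by decide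
  have hanti : ∀ u v : Fin N, f v u = - f u v := by
    intro u v
    rw [hflip]
    simp only [f]
    by_cases h : (u.val = 0 ∧ v.val = N - 1) ∨ (u.val = N - 1 ∧ v.val = 0)
    · rw [if_pos h, if_pos (by tauto)]
    · rw [if_neg h, if_neg (by tauto)]
  obtain ⟨c, hc⟩ := hcol f hanti
  have h1val : (1 : Fin N).val = 1 := by
    rw [Fin.val_one']
    exact Nat.mod_eq_of_lt (by omega)
  -- adjacency of consecutive vertices
  have hsucc : ∀ (i : ℕ) (hi : i + 1 < N),
      ((⟨i + 1, hi⟩ : Fin N) - ⟨i, by omega⟩).val = 1 := by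
    intro i hi
    have : (⟨i + 1, hi⟩ : Fin N) = (⟨i, by omega⟩ : Fin N) + 1 := by
      apply Fin.ext
      rw [Fin.add_def, h1val]
      exact (Nat.mod_eq_of_lt hi).symm
    rw [this, add_sub_cancel_left, h1val]
  have hadjsucc : ∀ (i : ℕ) (hi : i + 1 < N),
      (cycleGraph N).Adj ⟨i + 1, hi⟩ ⟨i, by omega⟩ := by
    intro i hi
    rw [cycleGraph_adj']
    exact Or.inl (hsucc i hi)
  -- the wrap-around edge
  have hwrapval : ((⟨0, by omega⟩ : Fin N) - ⟨N - 1, by omega⟩).val = 1 := by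
    have : (⟨0, by omega⟩ : Fin N) = (⟨N - 1, by omega⟩ : Fin N) + 1 := by
      apply Fin.ext
      rw [Fin.add_def, h1val]
      show 0 = (N - 1 + 1) % N
      rw [show N - 1 + 1 = N by omega, Nat.mod_self]
    rw [this, add_sub_cancel_left, h1val]
  have hadjwrap : (cycleGraph N).Adj ⟨N - 1, by omega⟩ ⟨0, by omega⟩ := by
    rw [cycleGraph_adj']
    exact Or.inr hwrapval
  have hz2 : ∀ a b : ZMod 2, a ≠ b → a = b + 1 := by decide
  -- induction along the path
  have hind : ∀ (i : ℕ) (hi : i < N), c ⟨i, hi⟩ = c ⟨0, by omega⟩ + (i : ZMod 2) := by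
    intro i
    induction i with
    | zero => intro hi; simp
    | succ k ih =>
      intro hi
      have hk' : k < N := by omega
      have hstep := hc ⟨k + 1, hi⟩ ⟨k, hk'⟩ (hadjsucc k hi)
      have hf0 : f ⟨k + 1, hi⟩ ⟨k, hk'⟩ = 0 := by
        have hcond : ¬((k + 1 = 0 ∧ k = N - 1) ∨ (k + 1 = N - 1 ∧ k = 0)) := by omega
        exact if_neg hcond
      rw [hf0, sub_ne_zero] at hstep
      have hx := hz2 _ _ hstep
      rw [hx, ih hk']
      push_cast
      ring
  have hlast := hind (N - 1) (by omega)
  have hcast : ((N - 1 : ℕ) : ZMod 2) = 1 := by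
    have : ((N - 1 : ℕ) : ZMod 2) = (((N - 1) % 2 : ℕ) : ZMod 2) := (ZMod.natCast_mod _ _).symm
    obtain ⟨j, hj⟩ := hEven
    rw [this, show (N - 1) % 2 = 1 by omega]
    norm_num
  rw [hcast] at hlast
  have hfin := hc ⟨N - 1, by omega⟩ ⟨0, by omega⟩ hadjwrap
  have hf1 : f ⟨N - 1, by omega⟩ ⟨0, by omega⟩ = 1 := by
    have hcond : ((N - 1 : ℕ) = 0 ∧ (0 : ℕ) = N - 1) ∨ ((N - 1 : ℕ) = N - 1 ∧ (0 : ℕ) = 0) :=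
      Or.inr ⟨rfl, rfl⟩
    exact if_pos hcond
  rw [hf1, hlast] at hfin
  apply hfin
  ring

open Fin.CommRing in
/-- The ordinary chromatic number of an even cycle is `2`. -/
lemma chromaticNumber_evenCycle' (n : ℕ) (hn : 2 ≤ n) :
    (cycleGraph (2 * n)).chromaticNumber = 2 := by
  haveI : NeZero (2 * n) := ⟨by omega⟩
  have h1val : (1 : Fin (2 * n)).val = 1 := by
    rw [Fin.val_one']
    exact Nat.mod_eq_of_lt (by omega)
  have hpar : ∀ u v : Fin (2 * n), (u - v).val = 1 → u.val % 2 ≠ v.val % 2 := by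
    intro u v huv
    have hsub : u - v = 1 := by
      apply Fin.ext; rw [huv, h1val]
    have h1 : u = v + 1 := by rw [← hsub]; ring
    have hu : u.val = (v.val + 1) % (2 * n) := by
      rw [h1, Fin.add_def, h1val]
    by_cases hv : v.val + 1 < 2 * n
    · rw [Nat.mod_eq_of_lt hv] at hu; omega
    · have hv2 : v.val = 2 * n - 1 := by have := v.isLt; omega
      rw [show v.val + 1 = 2 * n by omega, Nat.mod_self] at hu
      omega
  have hcol : (cycleGraph (2 * n)).Colorable 2 := by
    refine ⟨Coloring.mk (fun v => ⟨v.val % 2, by omega⟩) ?_⟩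
    intro u v hadj
    rw [cycleGraph_adj'] at hadj
    intro hEq
    have hEq' : u.val % 2 = v.val % 2 := by
      simpa [Fin.ext_iff] using hEq
    rcases hadj with h | h
    · exact hpar u v h hEq'
    · exact hpar v u h hEq'.symm
  apply le_antisymm
  · exact_mod_cast hcol.chromaticNumber_le
  · have hpath := chromaticNumber_pathGraph (2 * n) (by omega)
    rw [← hpath]
    exact chromaticNumber_mono _ pathGraph_le_cycleGraph


/-- For an even cycle `C_{2n}` with `n ≥ 2`, the group chromatic number is `3` while the
ordinary chromatic number is `2`; in particular `χ_g(C_{2n}) > χ(C_{2n})`. -/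
theorem groupChromaticNumber_evenCycle (n : ℕ) (hn : 2 ≤ n) :
    groupChromaticNumber (cycleGraph (2 * n)) = 3 ∧
      (cycleGraph (2 * n)).chromaticNumber = 2 ∧
      (cycleGraph (2 * n)).chromaticNumber <
        (groupChromaticNumber (cycleGraph (2 * n)) : ℕ∞) := by
  have hchrom := chromaticNumber_evenCycle' n hn
  have hgrp : groupChromaticNumber (cycleGraph (2 * n)) = 3 := by
    have h3 : 3 ∈ {m : ℕ | ∀ (A : Type) [AddCommGroup A] [Fintype A],
        m ≤ Fintype.card A → IsGroupColorable (cycleGraph (2 * n)) A} := by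
      intro A _ _ hA
      have hN : 2 * n = (2 * n - 3) + 3 := by omega
      rw [hN]
      exact cycleGraph_isGroupColorable (2 * n - 3) A hA
    have h2 : 2 ∉ {m : ℕ | ∀ (A : Type) [AddCommGroup A] [Fintype A],
        m ≤ Fintype.card A → IsGroupColorable (cycleGraph (2 * n)) A} := by
      intro h
      apply not_isGroupColorable_zmod2 (2 * n) (by omega) ⟨n, by omega⟩
      exact h (ZMod 2) (by rw [ZMod.card])
    unfold groupChromaticNumber
    apply le_antisymm (Nat.sInf_le h3)
    by_contra hlt
    push_neg at hlt
    have hle2 : sInf {m : ℕ | ∀ (A : Type) [AddCommGroup A] [Fintype A],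
        m ≤ Fintype.card A → IsGroupColorable (cycleGraph (2 * n)) A} ≤ 2 := by omega
    have hmem := Nat.sInf_mem (⟨3, h3⟩ : Set.Nonempty {m : ℕ | ∀ (A : Type) [AddCommGroup A]
        [Fintype A], m ≤ Fintype.card A → IsGroupColorable (cycleGraph (2 * n)) A})
    exact h2 (fun A _ _ hA => hmem A (le_trans hle2 hA))
  refine ⟨hgrp, hchrom, ?_⟩
  rw [hchrom, hgrp]
  exact_mod_cast (by norm_num : (2 : ℕ) < 3)
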